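/- arXiv:0907.0676 — 2 statements merged into one kernel-verified Lean document; each statement's English description precedes it below -/
import Mathlib

section
/- Under the urn model setup, for each j ∈ {1,…,d0} one has N_{n,j} → ∞ almost surely as n → ∞. -/
open MeasureTheory ProbabilityTheory Filter

theorem stmt13
    {Ω : Type*} [MeasurableSpace Ω] {μ : Measure Ω} [IsProbabilityMeasure μ]
    (d d0 : ℕ) (hd : 2 ≤ d) (hd01 : 1 ≤ d0) (hd0d : d0 ≤ d)
    (X A : ℕ → ℕ → Ω → ℝ)
    (hXmeas : ∀ n j, Measurable (X n j)) (hAmeas : ∀ n j, Measurable (A n j))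
    (β : ℝ)
    (hX01 : ∀ n, 1 ≤ n → ∀ j ∈ Finset.Icc 1 d, ∀ ω, X n j ω = 0 ∨ X n j ω = 1)
    (hXsum : ∀ n, 1 ≤ n → ∀ ω, ∑ j ∈ Finset.Icc 1 d, X n j ω = 1)
    (hAbd : ∀ n, 1 ≤ n → ∀ j ∈ Finset.Icc 1 d, ∀ ω, 0 ≤ A n j ω ∧ A n j ω ≤ β)
    (a : ℕ → ℝ) (ha : ∀ j ∈ Finset.Icc 1 d, 0 < a j)
    (G : ℕ → MeasurableSpace Ω)
    (hG0 : G 0 = ⊥)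
    (hG : ∀ n, 1 ≤ n → G n = ⨆ k ∈ Finset.Icc 1 n, ⨆ j ∈ Finset.Icc 1 d,
        (MeasurableSpace.comap (X k j) Real.measurableSpace ⊔
         MeasurableSpace.comap (A k j) Real.measurableSpace))
    (hindep : ∀ n, 1 ≤ n → ProbabilityTheory.Indep
        (⨆ j ∈ Finset.Icc 1 d, MeasurableSpace.comap (A n j) Real.measurableSpace)
        (G (n - 1) ⊔ ⨆ j ∈ Finset.Icc 1 d, MeasurableSpace.comap (X n j) Real.measurableSpace) μ)
    (N : ℕ → ℕ → Ω → ℝ)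
    (hN : ∀ n j ω, N n j ω = a j + ∑ k ∈ Finset.Icc 1 n, X k j ω * A k j ω)
    (S Sstar : ℕ → Ω → ℝ)
    (hS : ∀ n ω, S n ω = ∑ i ∈ Finset.Icc 1 d, N n i ω)
    (hSstar : ∀ n ω, Sstar n ω = ∑ i ∈ Finset.Icc 1 d0, N n i ω)
    (Z : ℕ → ℕ → Ω → ℝ)
    (hZ : ∀ n j ω, Z n j ω = N n j ω / S n ω)
    (hZcond : ∀ n, ∀ j ∈ Finset.Icc 1 d, Z n j =ᵐ[μ] μ[X (n + 1) j | G n])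
    (lam0 m : ℝ)
    (hlam0_eq : d0 = d → lam0 = 0)
    (hlam0_lt : ∀ h : d0 < d, lam0 = (Finset.Ioc d0 d).sup'
        (Finset.nonempty_Ioc.mpr h)
        (fun j => Filter.limsup (fun n : ℕ => ∫ ω, A n j ω ∂μ) Filter.atTop))
    (hEA : ∀ n, 1 ≤ n → ∀ j ∈ Finset.Icc 1 d0, ∫ ω, A n j ω ∂μ = ∫ ω, A n 1 ω ∂μ)
    (hm : Filter.Tendsto (fun n : ℕ => ∫ ω, A n 1 ω ∂μ) Filter.atTop (nhds m))
    (hmgt : lam0 < m)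
    (q : ℕ → ℝ)
    (hq : ∀ j ∈ Finset.Icc 1 d0,
        Filter.Tendsto (fun n : ℕ => ∫ ω, (A n j ω) ^ 2 ∂μ) Filter.atTop (nhds (q j))) :
    ∀ j ∈ Finset.Icc 1 d0,
      ∀ᵐ ω ∂μ, Filter.Tendsto (fun n : ℕ => N n j ω) Filter.atTop Filter.atTop := by

  rename_i mΩ hPμ
  -- basic facts
  intro j hj
  obtain ⟨hj1, hjd0⟩ := Finset.mem_Icc.mp hj
  have hjd : j ∈ Finset.Icc 1 d := Finset.mem_Icc.mpr ⟨hj1, hjd0.trans hd0d⟩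
  have h1d : (1 : ℕ) ∈ Finset.Icc 1 d := Finset.mem_Icc.mpr ⟨le_refl 1, le_trans (by norm_num) hd⟩
  have hΩ : Nonempty Ω := by
    by_contra h
    rw [not_nonempty_iff] at h
    have : μ Set.univ = 1 := measure_univ
    rw [Set.univ_eq_empty_iff.mpr h, measure_empty] at this
    exact zero_ne_one this
  obtain ⟨ω0⟩ := hΩ
  have hβ0 : 0 ≤ β := le_trans (hAbd 1 le_rfl 1 h1d ω0).1 (hAbd 1 le_rfl 1 h1d ω0).2
  -- G is a filtration
  have hGle : ∀ n, G n ≤ mΩ := by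
    intro n
    rcases Nat.eq_zero_or_pos n with h | h
    · rw [h, hG0]; exact bot_le
    · rw [hG n h]
      refine iSup₂_le fun k hk => iSup₂_le fun i hi => sup_le ?_ ?_
      · exact (hXmeas k i).comap_le
      · exact (hAmeas k i).comap_le
  have hGmono : Monotone G := by
    intro p r hpr
    rcases Nat.eq_zero_or_pos p with h | h
    · rw [h, hG0]; exact bot_le
    · rw [hG p h, hG r (le_trans h hpr)]
      refine iSup₂_le fun k hk => ?_
      have hk' : k ∈ Finset.Icc 1 r := by
        rw [Finset.mem_Icc] at hk ⊢; exact ⟨hk.1, hk.2.trans hpr⟩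
      exact le_iSup₂ (f := fun k (_ : k ∈ Finset.Icc 1 r) => ⨆ i ∈ Finset.Icc 1 d,
        (MeasurableSpace.comap (X k i) Real.measurableSpace ⊔
         MeasurableSpace.comap (A k i) Real.measurableSpace)) k hk'
  set ℱ : Filtration ℕ mΩ := ⟨G, hGmono, hGle⟩ with hℱ
  -- comap inclusions
  have hXle : ∀ n, 1 ≤ n → ∀ i ∈ Finset.Icc 1 d,
      MeasurableSpace.comap (X n i) Real.measurableSpace ≤ G n := by
    intro n hn i hi
    rw [hG n hn]
    have hn' : n ∈ Finset.Icc 1 n := Finset.mem_Icc.mpr ⟨hn, le_rfl⟩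
    calc MeasurableSpace.comap (X n i) Real.measurableSpace
        ≤ (MeasurableSpace.comap (X n i) Real.measurableSpace ⊔
           MeasurableSpace.comap (A n i) Real.measurableSpace) := le_sup_left
      _ ≤ ⨆ i ∈ Finset.Icc 1 d, (MeasurableSpace.comap (X n i) Real.measurableSpace ⊔
           MeasurableSpace.comap (A n i) Real.measurableSpace) :=
          le_iSup₂ (f := fun i (_ : i ∈ Finset.Icc 1 d) =>
            (MeasurableSpace.comap (X n i) Real.measurableSpace ⊔
             MeasurableSpace.comap (A n i) Real.measurableSpace)) i hi
      _ ≤ _ := le_iSup₂ (f := fun k (_ : k ∈ Finset.Icc 1 n) => ⨆ i ∈ Finset.Icc 1 d,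
          (MeasurableSpace.comap (X k i) Real.measurableSpace ⊔
           MeasurableSpace.comap (A k i) Real.measurableSpace)) n hn'
  have hAle : ∀ n, 1 ≤ n → ∀ i ∈ Finset.Icc 1 d,
      MeasurableSpace.comap (A n i) Real.measurableSpace ≤ G n := by
    intro n hn i hi
    rw [hG n hn]
    have hn' : n ∈ Finset.Icc 1 n := Finset.mem_Icc.mpr ⟨hn, le_rfl⟩
    calc MeasurableSpace.comap (A n i) Real.measurableSpace
        ≤ (MeasurableSpace.comap (X n i) Real.measurableSpace ⊔
           MeasurableSpace.comap (A n i) Real.measurableSpace) := le_sup_right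
      _ ≤ ⨆ i ∈ Finset.Icc 1 d, (MeasurableSpace.comap (X n i) Real.measurableSpace ⊔
           MeasurableSpace.comap (A n i) Real.measurableSpace) :=
          le_iSup₂ (f := fun i (_ : i ∈ Finset.Icc 1 d) =>
            (MeasurableSpace.comap (X n i) Real.measurableSpace ⊔
             MeasurableSpace.comap (A n i) Real.measurableSpace)) i hi
      _ ≤ _ := le_iSup₂ (f := fun k (_ : k ∈ Finset.Icc 1 n) => ⨆ i ∈ Finset.Icc 1 d,
          (MeasurableSpace.comap (X k i) Real.measurableSpace ⊔
           MeasurableSpace.comap (A k i) Real.measurableSpace)) n hn'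
  -- the process f
  set f : ℕ → Ω → ℝ := fun n ω => ∑ k ∈ Finset.Icc 1 n, X k j ω * A k j ω with hf
  have hfsucc : ∀ k : ℕ, f (k + 1) - f k = fun ω => X (k + 1) j ω * A (k + 1) j ω := by
    intro k
    funext ω
    simp only [Pi.sub_apply, hf]
    rw [Finset.sum_Icc_succ_top (Nat.le_add_left 1 k)]
    ring
  have hbound : ∀ n, 1 ≤ n → ∀ ω, 0 ≤ X n j ω * A n j ω ∧ X n j ω * A n j ω ≤ β := by
    intro n hn ω
    obtain ⟨hA0, hAβ⟩ := hAbd n hn j hjd ω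
    rcases hX01 n hn j hjd ω with hx | hx <;> rw [hx]
    · simp [hβ0]
    · simp [hA0, hAβ]
  have hfmono : ∀ ω, ∀ n : ℕ, f n ω ≤ f (n + 1) ω := by
    intro ω n
    have := congrFun (hfsucc n) ω
    simp only [Pi.sub_apply] at this
    nlinarith [(hbound (n + 1) (Nat.le_add_left 1 n) ω).1]
  have hfbdd : ∀ ω, ∀ n : ℕ, |f (n + 1) ω - f n ω| ≤ β := by
    intro ω n
    have := congrFun (hfsucc n) ω
    simp only [Pi.sub_apply] at this
    rw [this, abs_of_nonneg (hbound (n + 1) (Nat.le_add_left 1 n) ω).1]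
    exact (hbound (n + 1) (Nat.le_add_left 1 n) ω).2
  have hXAmeas : ∀ n, Measurable fun ω => X n j ω * A n j ω :=
    fun n => (hXmeas n j).mul (hAmeas n j)
  have hXAint : ∀ n, 1 ≤ n → Integrable (fun ω => X n j ω * A n j ω) μ := by
    intro n hn
    refine (integrable_const β).mono' (hXAmeas n).aestronglyMeasurable ?_
    filter_upwards with ω
    rw [Real.norm_eq_abs, abs_of_nonneg (hbound n hn ω).1]
    exact (hbound n hn ω).2
  have hfint : ∀ n, Integrable (f n) μ := by
    intro n
    simp only [hf]
    apply integrable_finset_sum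
    intro k hk
    exact hXAint k (Finset.mem_Icc.mp hk).1
  have hfadp : StronglyAdapted ℱ f := by
    intro n
    rcases Nat.eq_zero_or_pos n with h | h
    · subst h
      have : f 0 = fun _ => 0 := by funext ω; simp [hf]
      rw [this]
      exact stronglyMeasurable_const
    · apply Finset.stronglyMeasurable_fun_sum
      intro k hk
      obtain ⟨hk1, hkn⟩ := Finset.mem_Icc.mp hk
      have hkd : k ∈ Finset.Icc 1 n := hk
      have hx : Measurable[ℱ n] (X k j) :=
        (measurable_iff_comap_le.mpr le_rfl).mono
          (le_trans (hXle k hk1 j hjd) (hGmono hkn)) le_rfl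
      have ha' : Measurable[ℱ n] (A k j) :=
        (measurable_iff_comap_le.mpr le_rfl).mono
          (le_trans (hAle k hk1 j hjd) (hGmono hkn)) le_rfl
      exact (hx.mul ha').stronglyMeasurable
  -- key conditional expectation computation
  have key : ∀ k : ℕ, (μ[f (k + 1) - f k | G k]) =ᵐ[μ]
      fun ω => (∫ ω', A (k + 1) 1 ω' ∂μ) * Z k j ω := by
    intro k
    have hn : 1 ≤ k + 1 := Nat.le_add_left 1 k
    set mA := ⨆ i ∈ Finset.Icc 1 d, MeasurableSpace.comap (A (k+1) i) Real.measurableSpace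
      with hmA
    set mX := ⨆ i ∈ Finset.Icc 1 d, MeasurableSpace.comap (X (k+1) i) Real.measurableSpace
      with hmX
    set H := G k ⊔ mX with hH
    have hmAle : mA ≤ mΩ :=
      iSup₂_le fun i hi => (hAmeas (k+1) i).comap_le
    have hmXle : mX ≤ mΩ :=
      iSup₂_le fun i hi => (hXmeas (k+1) i).comap_le
    have hHle : H ≤ mΩ := sup_le (hGle k) hmXle
    have hind : Indep mA H μ := by
      have h := hindep (k+1) hn
      rw [Nat.add_sub_cancel] at h
      exact h
    have hXmeasH : Measurable[H] (X (k+1) j) := by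
      refine (measurable_iff_comap_le.mpr le_rfl).mono (le_trans ?_ le_sup_right) le_rfl
      exact le_iSup₂ (f := fun i (_ : i ∈ Finset.Icc 1 d) =>
        MeasurableSpace.comap (X (k+1) i) Real.measurableSpace) j hjd
    have hAmeasA : StronglyMeasurable[mA] (A (k+1) j) := by
      refine Measurable.stronglyMeasurable ?_
      refine (measurable_iff_comap_le.mpr le_rfl).mono ?_ le_rfl
      exact le_iSup₂ (f := fun i (_ : i ∈ Finset.Icc 1 d) =>
        MeasurableSpace.comap (A (k+1) i) Real.measurableSpace) j hjd
    have hAint : Integrable (A (k+1) j) μ := by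
      refine (integrable_const β).mono' (hAmeas (k+1) j).aestronglyMeasurable ?_
      filter_upwards with ω
      rw [Real.norm_eq_abs, abs_of_nonneg (hAbd (k+1) hn j hjd ω).1]
      exact (hAbd (k+1) hn j hjd ω).2
    have hXbd : ∀ᵐ ω ∂μ, ‖X (k+1) j ω‖ ≤ 1 := by
      filter_upwards with ω
      rcases hX01 (k+1) hn j hjd ω with hx | hx <;> rw [hx] <;> norm_num
    have step1 : μ[X (k+1) j * A (k+1) j | H] =ᵐ[μ] X (k+1) j * μ[A (k+1) j | H] :=
      condExp_stronglyMeasurable_mul_of_bound hHle hXmeasH.stronglyMeasurable hAint 1 hXbd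
    have step2 : μ[A (k+1) j | H] =ᵐ[μ] fun _ => ∫ ω', A (k+1) j ω' ∂μ :=
      condExp_indep_eq hmAle hHle hAmeasA hind
    have step3 : μ[X (k+1) j * A (k+1) j | H] =ᵐ[μ]
        (∫ ω', A (k+1) j ω' ∂μ) • X (k+1) j := by
      refine step1.trans ?_
      filter_upwards [step2] with ω hω
      simp only [Pi.mul_apply, Pi.smul_apply, smul_eq_mul, hω]
      ring
    have tower : μ[X (k+1) j * A (k+1) j | G k] =ᵐ[μ]
        μ[μ[X (k+1) j * A (k+1) j | H] | G k] :=
      (condExp_condExp_of_le le_sup_left hHle).symm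
    have step4 : μ[μ[X (k+1) j * A (k+1) j | H] | G k] =ᵐ[μ]
        μ[(∫ ω', A (k+1) j ω' ∂μ) • X (k+1) j | G k] := condExp_congr_ae step3
    have step5 : μ[(∫ ω', A (k+1) j ω' ∂μ) • X (k+1) j | G k] =ᵐ[μ]
        (∫ ω', A (k+1) j ω' ∂μ) • μ[X (k+1) j | G k] := condExp_smul _ _ _
    have hfd : f (k+1) - f k = X (k+1) j * A (k+1) j := by
      rw [hfsucc k]; rfl
    have hEAj : ∫ ω', A (k+1) j ω' ∂μ = ∫ ω', A (k+1) 1 ω' ∂μ := hEA (k+1) hn j hj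
    calc μ[f (k+1) - f k | G k] = μ[X (k+1) j * A (k+1) j | G k] := by rw [hfd]
      _ =ᵐ[μ] μ[μ[X (k+1) j * A (k+1) j | H] | G k] := tower
      _ =ᵐ[μ] μ[(∫ ω', A (k+1) j ω' ∂μ) • X (k+1) j | G k] := step4
      _ =ᵐ[μ] (∫ ω', A (k+1) j ω' ∂μ) • μ[X (k+1) j | G k] := step5
      _ =ᵐ[μ] fun ω => (∫ ω', A (k+1) 1 ω' ∂μ) * Z k j ω := by
          filter_upwards [hZcond k j hjd] with ω hω
          simp only [Pi.smul_apply, smul_eq_mul, hEAj, ← hω]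
  -- deterministic bounds
  have hXAnn : ∀ k, 1 ≤ k → ∀ i ∈ Finset.Icc 1 d, ∀ ω, 0 ≤ X k i ω * A k i ω := by
    intro k hk i hi ω
    obtain ⟨hA0, _⟩ := hAbd k hk i hi ω
    rcases hX01 k hk i hi ω with hx | hx <;> rw [hx] <;> simp [hA0]
  have hNlb : ∀ n, ∀ i ∈ Finset.Icc 1 d, ∀ ω, a i ≤ N n i ω := by
    intro n i hi ω
    rw [hN]
    have : (0:ℝ) ≤ ∑ k ∈ Finset.Icc 1 n, X k i ω * A k i ω :=
      Finset.sum_nonneg fun k hk => hXAnn k (Finset.mem_Icc.mp hk).1 i hi ω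
    linarith
  have hSapos : 0 < ∑ i ∈ Finset.Icc 1 d, a i := by
    refine Finset.sum_pos (fun i hi => ha i hi) ⟨1, h1d⟩
  have hSpos : ∀ n ω, 0 < S n ω := by
    intro n ω
    rw [hS]
    refine Finset.sum_pos (fun i hi => lt_of_lt_of_le (ha i hi) (hNlb n i hi ω)) ⟨1, h1d⟩
  have hSle : ∀ n ω, S n ω ≤ (∑ i ∈ Finset.Icc 1 d, a i) + β * n := by
    intro n ω
    rw [hS]
    have h1 : ∀ i ∈ Finset.Icc 1 d, N n i ω = a i + ∑ k ∈ Finset.Icc 1 n, X k i ω * A k i ω :=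
      fun i _ => hN n i ω
    rw [Finset.sum_congr rfl h1, Finset.sum_add_distrib]
    have h2 : ∑ i ∈ Finset.Icc 1 d, ∑ k ∈ Finset.Icc 1 n, X k i ω * A k i ω
        = ∑ k ∈ Finset.Icc 1 n, ∑ i ∈ Finset.Icc 1 d, X k i ω * A k i ω := Finset.sum_comm
    rw [h2]
    have h3 : ∑ k ∈ Finset.Icc 1 n, ∑ i ∈ Finset.Icc 1 d, X k i ω * A k i ω ≤
        ∑ k ∈ Finset.Icc 1 n, β := by
      refine Finset.sum_le_sum fun k hk => ?_
      obtain ⟨hk1, _⟩ := Finset.mem_Icc.mp hk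
      have h4 : ∀ i ∈ Finset.Icc 1 d, X k i ω * A k i ω ≤ X k i ω * β := by
        intro i hi
        obtain ⟨hA0, hAβ⟩ := hAbd k hk1 i hi ω
        rcases hX01 k hk1 i hi ω with hx | hx <;> rw [hx] <;> simp [hAβ]
      calc ∑ i ∈ Finset.Icc 1 d, X k i ω * A k i ω ≤ ∑ i ∈ Finset.Icc 1 d, X k i ω * β :=
            Finset.sum_le_sum h4
        _ = (∑ i ∈ Finset.Icc 1 d, X k i ω) * β := by rw [Finset.sum_mul]
        _ = β := by rw [hXsum k hk1 ω, one_mul]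
    have h5 : ∑ k ∈ Finset.Icc 1 n, (β:ℝ) = n * β := by
      rw [Finset.sum_const, Nat.card_Icc]
      simp [nsmul_eq_mul]
    rw [h5] at h3
    linarith
  have hZlb : ∀ n ω, a j / ((∑ i ∈ Finset.Icc 1 d, a i) + β * n) ≤ Z n j ω := by
    intro n ω
    rw [hZ]
    exact div_le_div₀ (le_trans (ha j hjd).le (hNlb n j hjd ω)) (hNlb n j hjd ω)
      (hSpos n ω) (hSle n ω)
  have hZnn : ∀ n ω, 0 ≤ Z n j ω := by
    intro n ω
    rw [hZ]
    exact div_nonneg (le_trans (ha j hjd).le (hNlb n j hjd ω)) (hSpos n ω).le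
  -- divergence of the predictable part
  -- m is positive
  have hlam0nn : 0 ≤ lam0 := by
    rcases eq_or_lt_of_le hd0d with h | h
    · rw [hlam0_eq h]
    · rw [hlam0_lt h]
      have hdIoc : d ∈ Finset.Ioc d0 d := Finset.mem_Ioc.mpr ⟨h, le_rfl⟩
      have hdd : d ∈ Finset.Icc 1 d := Finset.mem_Icc.mpr ⟨le_trans (by norm_num) hd, le_rfl⟩
      have hlims : (0:ℝ) ≤ limsup (fun n : ℕ => ∫ ω, A n d ω ∂μ) atTop := by
        refine le_limsup_of_frequently_le ?_ ?_
        · have hev : ∀ᶠ n in atTop, (0:ℝ) ≤ ∫ ω, A n d ω ∂μ := by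
            filter_upwards [eventually_ge_atTop 1] with n hn
            exact integral_nonneg fun ω => (hAbd n hn d hdd ω).1
          exact hev.frequently
        · refine ⟨β, ?_⟩
          rw [Filter.eventually_map]
          filter_upwards [eventually_ge_atTop 1] with n hn
          have hint : Integrable (A n d) μ := by
            refine (integrable_const β).mono' (hAmeas n d).aestronglyMeasurable ?_
            filter_upwards with ω
            rw [Real.norm_eq_abs, abs_of_nonneg (hAbd n hn d hdd ω).1]
            exact (hAbd n hn d hdd ω).2
          calc ∫ ω, A n d ω ∂μ ≤ ∫ _, β ∂μ :=
                integral_mono hint (integrable_const β) fun ω => (hAbd n hn d hdd ω).2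
            _ = β := by simp
      exact le_trans hlims (Finset.le_sup' (fun j => limsup (fun n : ℕ => ∫ ω, A n j ω ∂μ) atTop) hdIoc)
  have hmpos : 0 < m := lt_of_le_of_lt hlam0nn hmgt
  -- the means c k
  set c : ℕ → ℝ := fun k => ∫ ω', A (k+1) 1 ω' ∂μ with hc
  have hcnn : ∀ k, 0 ≤ c k :=
    fun k => integral_nonneg fun ω => (hAbd (k+1) (Nat.le_add_left 1 k) 1 h1d ω).1
  have hcK : ∃ K : ℕ, ∀ k ≥ K, m / 2 ≤ c k := by
    have h1 : Tendsto c atTop (nhds m) := by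
      rw [hc]
      exact hm.comp (tendsto_add_atTop_nat 1)
    have h2 := h1.eventually (eventually_ge_nhds (by linarith : m / 2 < m))
    exact eventually_atTop.mp h2
  obtain ⟨K, hK⟩ := hcK
  set Sa : ℝ := ∑ i ∈ Finset.Icc 1 d, a i with hSa
  set ε : ℝ := (m / 2) * (a j / (Sa + β)) with hε
  have hSaβ : 0 < Sa + β := by linarith
  have hεpos : 0 < ε := by
    apply mul_pos (by linarith)
    exact div_pos (ha j hjd) hSaβ
  have hterm : ∀ k ≥ K, ∀ ω, ε * (1 / (k + 1 : ℝ)) ≤ c k * Z k j ω := by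
    intro k hk ω
    have h1 : Sa + β * k ≤ (Sa + β) * (k + 1 : ℝ) := by
      have : (0:ℝ) ≤ Sa * k := mul_nonneg hSapos.le (Nat.cast_nonneg k)
      nlinarith
    have h2 : a j / ((Sa + β) * (k + 1 : ℝ)) ≤ a j / (Sa + β * k) := by
      apply div_le_div_of_nonneg_left (ha j hjd).le
      · positivity
      · exact h1
    have h3 : a j / ((Sa + β) * (k + 1 : ℝ)) ≤ Z k j ω := le_trans h2 (hZlb k ω)
    have h4 : ε * (1 / (k + 1 : ℝ)) = (m / 2) * (a j / ((Sa + β) * (k + 1 : ℝ))) := by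
      have hk1 : ((k:ℝ) + 1) ≠ 0 := by positivity
      have hsb : Sa + β ≠ 0 := ne_of_gt hSaβ
      rw [hε]
      field_simp
    rw [h4]
    refine mul_le_mul (hK k hk) h3 ?_ (le_trans (by linarith) (hK k hk))
    exact div_nonneg (ha j hjd).le (by positivity)
  have hdiv : ∀ᵐ ω ∂μ, Tendsto (fun n => predictablePart f ℱ μ n ω) atTop atTop := by
    have hae : ∀ᵐ ω ∂μ, ∀ k, (μ[f (k + 1) - f k | ℱ k]) ω
        = (∫ ω', A (k + 1) 1 ω' ∂μ) * Z k j ω := by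
      rw [ae_all_iff]
      intro k
      exact key k
    filter_upwards [hae] with ω hω
    have hpp : ∀ n, predictablePart f ℱ μ n ω = ∑ i ∈ Finset.range n, c i * Z i j ω := by
      intro n
      rw [predictablePart, Finset.sum_apply]
      exact Finset.sum_congr rfl fun i _ => hω i
    have hlow : Tendsto (fun n => ε * ∑ i ∈ Finset.range n, (1 / (i + 1 : ℝ))
        - ∑ i ∈ Finset.range K, ε * (1 / (i + 1 : ℝ))) atTop atTop := by
      apply tendsto_atTop_add_const_right
      exact Tendsto.const_mul_atTop hεpos Real.tendsto_sum_range_one_div_nat_succ_atTop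
    refine tendsto_atTop_mono' atTop ?_ hlow
    filter_upwards [eventually_ge_atTop K] with n hn
    rw [hpp n]
    have e1 : ε * ∑ i ∈ Finset.range n, (1 / (i + 1 : ℝ))
        = ∑ i ∈ Finset.range n, ε * (1 / (i + 1 : ℝ)) := Finset.mul_sum _ _ _
    rw [e1, ← Finset.sum_Ico_eq_sub _ hn]
    have e2 : ∑ i ∈ Finset.Ico K n, ε * (1 / (i + 1 : ℝ))
        ≤ ∑ i ∈ Finset.Ico K n, c i * Z i j ω := by
      refine Finset.sum_le_sum fun i hi => ?_
      exact hterm i (Finset.mem_Ico.mp hi).1 ω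
    refine le_trans e2 ?_
    refine Finset.sum_le_sum_of_subset_of_nonneg ?_ ?_
    · intro i hi
      exact Finset.mem_range.mpr ((Finset.mem_Ico.mp hi).2)
    · intro i _ _
      exact mul_nonneg (hcnn i) (hZnn i ω)
  -- apply the generalized Borel-Cantelli
  have hiff := tendsto_sum_indicator_atTop_iff (μ := μ) (ℱ := ℱ) (f := f) (R := ⟨β, hβ0⟩)
    (Filter.Eventually.of_forall fun ω n => hfmono ω n) hfadp hfint
    (Filter.Eventually.of_forall fun ω n => hfbdd ω n)
  filter_upwards [hiff, hdiv] with ω hω hdω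
  have hft : Tendsto (fun n => f n ω) atTop atTop := hω.mpr hdω
  have : (fun n : ℕ => N n j ω) = fun n => a j + f n ω := by
    funext n; rw [hN]
  rw [this]
  exact tendsto_atTop_add_const_left _ _ hft
end

section
/- Under the urn model setup, for each i ∈ {1,…,d0} the series ∑_n 1/(S_n · N_{n,i}) converges almost surely. -/
open MeasureTheory ProbabilityTheory Filter

theorem stmt15
    {Ω : Type*} [MeasurableSpace Ω] {μ : Measure Ω} [IsProbabilityMeasure μ]
    (d d0 : ℕ) (hd : 2 ≤ d) (hd01 : 1 ≤ d0) (hd0d : d0 ≤ d)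
    (X A : ℕ → ℕ → Ω → ℝ)
    (hXmeas : ∀ n j, Measurable (X n j)) (hAmeas : ∀ n j, Measurable (A n j))
    (β : ℝ)
    (hX01 : ∀ n, 1 ≤ n → ∀ j ∈ Finset.Icc 1 d, ∀ ω, X n j ω = 0 ∨ X n j ω = 1)
    (hXsum : ∀ n, 1 ≤ n → ∀ ω, ∑ j ∈ Finset.Icc 1 d, X n j ω = 1)
    (hAbd : ∀ n, 1 ≤ n → ∀ j ∈ Finset.Icc 1 d, ∀ ω, 0 ≤ A n j ω ∧ A n j ω ≤ β)
    (a : ℕ → ℝ) (ha : ∀ j ∈ Finset.Icc 1 d, 0 < a j)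
    (G : ℕ → MeasurableSpace Ω)
    (hG0 : G 0 = ⊥)
    (hG : ∀ n, 1 ≤ n → G n = ⨆ k ∈ Finset.Icc 1 n, ⨆ j ∈ Finset.Icc 1 d,
        (MeasurableSpace.comap (X k j) Real.measurableSpace ⊔
         MeasurableSpace.comap (A k j) Real.measurableSpace))
    (hindep : ∀ n, 1 ≤ n → ProbabilityTheory.Indep
        (⨆ j ∈ Finset.Icc 1 d, MeasurableSpace.comap (A n j) Real.measurableSpace)
        (G (n - 1) ⊔ ⨆ j ∈ Finset.Icc 1 d, MeasurableSpace.comap (X n j) Real.measurableSpace) μ)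
    (N : ℕ → ℕ → Ω → ℝ)
    (hN : ∀ n j ω, N n j ω = a j + ∑ k ∈ Finset.Icc 1 n, X k j ω * A k j ω)
    (S Sstar : ℕ → Ω → ℝ)
    (hS : ∀ n ω, S n ω = ∑ i ∈ Finset.Icc 1 d, N n i ω)
    (hSstar : ∀ n ω, Sstar n ω = ∑ i ∈ Finset.Icc 1 d0, N n i ω)
    (Z : ℕ → ℕ → Ω → ℝ)
    (hZ : ∀ n j ω, Z n j ω = N n j ω / S n ω)
    (hZcond : ∀ n, ∀ j ∈ Finset.Icc 1 d, Z n j =ᵐ[μ] μ[X (n + 1) j | G n])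
    (lam0 m : ℝ)
    (hlam0_eq : d0 = d → lam0 = 0)
    (hlam0_lt : ∀ h : d0 < d, lam0 = (Finset.Ioc d0 d).sup'
        (Finset.nonempty_Ioc.mpr h)
        (fun j => Filter.limsup (fun n : ℕ => ∫ ω, A n j ω ∂μ) Filter.atTop))
    (hEA : ∀ n, 1 ≤ n → ∀ j ∈ Finset.Icc 1 d0, ∫ ω, A n j ω ∂μ = ∫ ω, A n 1 ω ∂μ)
    (hm : Filter.Tendsto (fun n : ℕ => ∫ ω, A n 1 ω ∂μ) Filter.atTop (nhds m))
    (hmgt : lam0 < m)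
    (q : ℕ → ℝ)
    (hq : ∀ j ∈ Finset.Icc 1 d0,
        Filter.Tendsto (fun n : ℕ => ∫ ω, (A n j ω) ^ 2 ∂μ) Filter.atTop (nhds (q j))) :
    ∀ i ∈ Finset.Icc 1 d0,
      ∀ᵐ ω ∂μ, Summable (fun n : ℕ => 1 / (S n ω * N n i ω)) := by
  intro i hi
  obtain ⟨hi1, hid0⟩ := Finset.mem_Icc.mp hi
  have hiId : i ∈ Finset.Icc 1 d := Finset.mem_Icc.mpr ⟨hi1, le_trans hid0 hd0d⟩
  have hai : 0 < a i := ha i hiId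
  have h1d : (1 : ℕ) ∈ Finset.Icc 1 d := Finset.mem_Icc.mpr ⟨le_rfl, le_trans one_le_two hd⟩
  have hdId : d ∈ Finset.Icc 1 d := Finset.mem_Icc.mpr ⟨le_trans one_le_two hd, le_rfl⟩
  -- Ω is nonempty
  have hΩ : Nonempty Ω := by
    by_contra h
    rw [not_nonempty_iff] at h
    have h1 : μ Set.univ = 1 := measure_univ
    rw [Set.univ_eq_empty_iff.mpr h, measure_empty] at h1
    exact zero_ne_one h1
  obtain ⟨ω0⟩ := hΩ
  have hβ0 : 0 ≤ β := le_trans (hAbd 1 le_rfl 1 h1d ω0).1 (hAbd 1 le_rfl 1 h1d ω0).2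
  -- pointwise facts
  have hXAnn : ∀ k, 1 ≤ k → ∀ j ∈ Finset.Icc 1 d, ∀ ω, 0 ≤ X k j ω * A k j ω := by
    intro k hk j hj ω
    rcases hX01 k hk j hj ω with h | h
    · rw [h, zero_mul]
    · rw [h, one_mul]; exact (hAbd k hk j hj ω).1
  have hXAβ : ∀ k, 1 ≤ k → ∀ j ∈ Finset.Icc 1 d, ∀ ω, X k j ω * A k j ω ≤ β := by
    intro k hk j hj ω
    rcases hX01 k hk j hj ω with h | h
    · rw [h, zero_mul]; exact hβ0
    · rw [h, one_mul]; exact (hAbd k hk j hj ω).2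
  have hNge : ∀ n, ∀ j, j ∈ Finset.Icc 1 d → ∀ ω, a j ≤ N n j ω := by
    intro n j hj ω
    rw [hN n j ω]
    have h0 : 0 ≤ ∑ k ∈ Finset.Icc 1 n, X k j ω * A k j ω :=
      Finset.sum_nonneg fun k hk => hXAnn k (Finset.mem_Icc.mp hk).1 j hj ω
    linarith
  have hNpos : ∀ n, ∀ j, j ∈ Finset.Icc 1 d → ∀ ω, 0 < N n j ω :=
    fun n j hj ω => lt_of_lt_of_le (ha j hj) (hNge n j hj ω)
  set s0 : ℝ := ∑ j ∈ Finset.Icc 1 d, a j with hs0def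
  have hs0 : 0 < s0 := Finset.sum_pos (fun j hj => ha j hj) ⟨1, h1d⟩
  have hSge : ∀ n ω, s0 ≤ S n ω := by
    intro n ω; rw [hS n ω]
    exact Finset.sum_le_sum fun j hj => hNge n j hj ω
  have hSpos : ∀ n ω, 0 < S n ω := fun n ω => lt_of_lt_of_le hs0 (hSge n ω)
  have hNS : ∀ n ω, N n i ω ≤ S n ω := by
    intro n ω; rw [hS n ω]
    exact Finset.single_le_sum (fun j hj => le_of_lt (hNpos n j hj ω)) hiId
  have hNsucc : ∀ n ω, N (n + 1) i ω = N n i ω + X (n + 1) i ω * A (n + 1) i ω := by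
    intro n ω
    rw [hN (n + 1) i ω, hN n i ω, Finset.sum_Icc_succ_top (Nat.le_add_left 1 n)]
    ring
  -- measurability
  have hNmeas : ∀ n j, Measurable (N n j) := by
    intro n j
    have h : N n j = fun ω => a j + ∑ k ∈ Finset.Icc 1 n, X k j ω * A k j ω :=
      funext fun ω => hN n j ω
    rw [h]
    exact measurable_const.add (Finset.measurable_sum _ fun k _ => (hXmeas k j).mul (hAmeas k j))
  have hSmeas : ∀ n, Measurable (S n) := by
    intro n
    have h : S n = fun ω => ∑ j ∈ Finset.Icc 1 d, N n j ω := funext fun ω => hS n ω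
    rw [h]
    exact Finset.measurable_sum _ fun j _ => hNmeas n j
  -- integrability of bounded measurable functions
  have intbd : ∀ (g : Ω → ℝ) (C : ℝ), Measurable g → (∀ ω, 0 ≤ g ω) → (∀ ω, g ω ≤ C) →
      Integrable g μ := by
    intro g C hg h0 hC
    refine (integrable_const C).mono' hg.aestronglyMeasurable ?_
    refine ae_of_all _ fun ω => ?_
    rw [Real.norm_eq_abs, abs_of_nonneg (h0 ω)]
    exact hC ω
  -- G n is a sub-σ-algebra
  have hGle : ∀ n, G n ≤ ‹MeasurableSpace Ω› := by
    intro n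
    rcases Nat.eq_zero_or_pos n with h | h
    · rw [h, hG0]; exact bot_le
    · rw [hG n h]
      refine iSup₂_le fun k _ => iSup₂_le fun j _ => sup_le ?_ ?_
      · exact (hXmeas k j).comap_le
      · exact (hAmeas k j).comap_le
  have hXAG : ∀ n k, 1 ≤ k → k ≤ n →
      Measurable[G n] (X k i) ∧ Measurable[G n] (A k i) := by
    intro n k hk1 hkn
    have hn1 : 1 ≤ n := le_trans hk1 hkn
    have hkm : k ∈ Finset.Icc 1 n := Finset.mem_Icc.mpr ⟨hk1, hkn⟩
    constructor
    · apply Measurable.of_comap_le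
      rw [hG n hn1]
      exact le_trans (le_trans le_sup_left (le_iSup₂ (f := fun j (_ : j ∈ Finset.Icc 1 d) =>
        MeasurableSpace.comap (X k j) Real.measurableSpace ⊔
        MeasurableSpace.comap (A k j) Real.measurableSpace) i hiId))
        (le_iSup₂ (f := fun k (_ : k ∈ Finset.Icc 1 n) => ⨆ j ∈ Finset.Icc 1 d,
          (MeasurableSpace.comap (X k j) Real.measurableSpace ⊔
           MeasurableSpace.comap (A k j) Real.measurableSpace)) k hkm)
    · apply Measurable.of_comap_le
      rw [hG n hn1]
      exact le_trans (le_trans le_sup_right (le_iSup₂ (f := fun j (_ : j ∈ Finset.Icc 1 d) =>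
        MeasurableSpace.comap (X k j) Real.measurableSpace ⊔
        MeasurableSpace.comap (A k j) Real.measurableSpace) i hiId))
        (le_iSup₂ (f := fun k (_ : k ∈ Finset.Icc 1 n) => ⨆ j ∈ Finset.Icc 1 d,
          (MeasurableSpace.comap (X k j) Real.measurableSpace ⊔
           MeasurableSpace.comap (A k j) Real.measurableSpace)) k hkm)
  have hNG : ∀ n, Measurable[G n] (N n i) := by
    intro n
    have h : N n i = fun ω => a i + ∑ k ∈ Finset.Icc 1 n, X k i ω * A k i ω :=
      funext fun ω => hN n i ω
    rw [h]
    apply Measurable.add (@measurable_const ℝ Ω _ (G n) _)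
    apply Finset.measurable_sum
    intro k hk
    obtain ⟨hk1, hkn⟩ := Finset.mem_Icc.mp hk
    exact ((hXAG n k hk1 hkn).1).mul ((hXAG n k hk1 hkn).2)
  -- m is positive
  have hm0 : 0 < m := by
    rcases lt_or_eq_of_le hd0d with h | h
    · have hdIoc : d ∈ Finset.Ioc d0 d := Finset.mem_Ioc.mpr ⟨h, le_rfl⟩
      have hintA : ∀ n : ℕ, 1 ≤ n → Integrable (A n d) μ := fun n hn =>
        intbd _ β (hAmeas n d) (fun ω => (hAbd n hn d hdId ω).1) fun ω => (hAbd n hn d hdId ω).2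
      have hbd : IsBoundedUnder (· ≤ ·) atTop (fun n : ℕ => ∫ ω, A n d ω ∂μ) := by
        refine ⟨β, eventually_map.mpr (eventually_atTop.mpr ⟨1, fun n hn => ?_⟩)⟩
        calc ∫ ω, A n d ω ∂μ ≤ ∫ _, β ∂μ :=
              integral_mono (hintA n hn) (integrable_const β) fun ω => (hAbd n hn d hdId ω).2
          _ = β := by simp
      have hlim : (0 : ℝ) ≤ limsup (fun n : ℕ => ∫ ω, A n d ω ∂μ) atTop := by
        refine le_limsup_of_frequently_le ?_ hbd
        refine (eventually_atTop.mpr ⟨1, fun n hn => ?_⟩).frequently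
        exact integral_nonneg fun ω => (hAbd n hn d hdId ω).1
      have hle : limsup (fun n : ℕ => ∫ ω, A n d ω ∂μ) atTop ≤ lam0 := by
        rw [hlam0_lt h]
        exact Finset.le_sup' (fun j => limsup (fun n : ℕ => ∫ ω, A n j ω ∂μ) atTop) hdIoc
      linarith
    · have := hlam0_eq h; linarith
  obtain ⟨n0, hn0⟩ : ∃ n0 : ℕ, ∀ n, n ≥ n0 → m / 2 < ∫ ω, A n 1 ω ∂μ :=
    eventually_atTop.mp (hm.eventually (eventually_gt_nhds (half_lt_self hm0)))
  set n1 : ℕ := max n0 1 with hn1def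
  -- basic integrability
  have hfmeas : ∀ n, Measurable fun ω => 1 / (S n ω * N n i ω) :=
    fun n => measurable_const.div ((hSmeas n).mul (hNmeas n i))
  have hfnn : ∀ n ω, 0 ≤ 1 / (S n ω * N n i ω) := fun n ω =>
    le_of_lt (one_div_pos.mpr (mul_pos (hSpos n ω) (hNpos n i hiId ω)))
  have hfint : ∀ n, Integrable (fun ω => 1 / (S n ω * N n i ω)) μ := by
    intro n
    refine intbd _ (1 / (s0 * a i)) (hfmeas n) (fun ω => hfnn n ω) fun ω => ?_
    refine one_div_le_one_div_of_le (mul_pos hs0 hai) ?_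
    exact mul_le_mul (hSge n ω) (hNge n i hiId ω) (le_of_lt hai) (le_of_lt (hSpos n ω))
  have hinvNint : ∀ n, Integrable (fun ω => 1 / N n i ω) μ := by
    intro n
    refine intbd _ (1 / a i) (measurable_const.div (hNmeas n i))
      (fun ω => le_of_lt (one_div_pos.mpr (hNpos n i hiId ω))) fun ω =>
      one_div_le_one_div_of_le hai (hNge n i hiId ω)
  have hu_nn : ∀ n, 0 ≤ ∫ ω, 1 / N n i ω ∂μ := fun n =>
    integral_nonneg fun ω => le_of_lt (one_div_pos.mpr (hNpos n i hiId ω))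
  set c : ℝ := m / 2 * (a i / (a i + β)) with hcdef
  have haβ : 0 < a i + β := by linarith
  have hcpos : 0 < c := mul_pos (half_pos hm0) (div_pos hai haβ)
  -- the key estimate
  have key : ∀ n, n1 ≤ n →
      c * ∫ ω, 1 / (S n ω * N n i ω) ∂μ ≤
        (∫ ω, 1 / N n i ω ∂μ) - ∫ ω, 1 / N (n + 1) i ω ∂μ := by
    intro n hn
    have hn11 : (1 : ℕ) ≤ n + 1 := Nat.le_add_left 1 n
    have hApt : ∀ ω, 0 ≤ A (n + 1) i ω ∧ A (n + 1) i ω ≤ β := fun ω => hAbd (n + 1) hn11 i hiId ω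
    have hXpt : ∀ ω, X (n + 1) i ω = 0 ∨ X (n + 1) i ω = 1 := fun ω => hX01 (n + 1) hn11 i hiId ω
    have hX0 : ∀ ω, 0 ≤ X (n + 1) i ω := by
      intro ω; rcases hXpt ω with h | h <;> rw [h] <;> norm_num
    have hX1 : ∀ ω, X (n + 1) i ω ≤ 1 := by
      intro ω; rcases hXpt ω with h | h <;> rw [h] <;> norm_num
    have hgpos : ∀ ω, 0 < N n i ω * (N n i ω + β) :=
      fun ω => mul_pos (hNpos n i hiId ω) (by linarith [hNpos n i hiId ω])
    have hgbd : ∀ ω, (N n i ω * (N n i ω + β))⁻¹ ≤ (a i * a i)⁻¹ := by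
      intro ω
      refine inv_anti₀ (mul_pos hai hai) ?_
      refine mul_le_mul (hNge n i hiId ω) ?_ (le_of_lt hai) (le_of_lt (hNpos n i hiId ω))
      linarith [hNge n i hiId ω]
    -- integrable pieces
    have intA : Integrable (A (n + 1) i) μ :=
      intbd _ β (hAmeas _ _) (fun ω => (hApt ω).1) fun ω => (hApt ω).2
    have intX : Integrable (X (n + 1) i) μ :=
      intbd _ 1 (hXmeas _ _) hX0 hX1
    have hhmeas : Measurable fun ω => (N n i ω * (N n i ω + β))⁻¹ * X (n + 1) i ω :=
      (((hNmeas n i).mul ((hNmeas n i).add measurable_const)).inv).mul (hXmeas _ _)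
    have inth : Integrable (fun ω => (N n i ω * (N n i ω + β))⁻¹ * X (n + 1) i ω) μ := by
      refine intbd _ ((a i * a i)⁻¹) hhmeas (fun ω => ?_) fun ω => ?_
      · exact mul_nonneg (le_of_lt (inv_pos.mpr (hgpos ω))) (hX0 ω)
      · calc (N n i ω * (N n i ω + β))⁻¹ * X (n + 1) i ω
            ≤ (N n i ω * (N n i ω + β))⁻¹ * 1 :=
              mul_le_mul_of_nonneg_left (hX1 ω) (le_of_lt (inv_pos.mpr (hgpos ω)))
          _ = (N n i ω * (N n i ω + β))⁻¹ := mul_one _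
          _ ≤ (a i * a i)⁻¹ := hgbd ω
    have intAh : Integrable
        (fun ω => A (n + 1) i ω * ((N n i ω * (N n i ω + β))⁻¹ * X (n + 1) i ω)) μ := by
      refine intbd _ (β * (a i * a i)⁻¹) ((hAmeas _ _).mul hhmeas) (fun ω => ?_) fun ω => ?_
      · exact mul_nonneg (hApt ω).1 (mul_nonneg (le_of_lt (inv_pos.mpr (hgpos ω))) (hX0 ω))
      · refine mul_le_mul (hApt ω).2 ?_ ?_ hβ0
        · calc (N n i ω * (N n i ω + β))⁻¹ * X (n + 1) i ω
              ≤ (N n i ω * (N n i ω + β))⁻¹ * 1 :=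
                mul_le_mul_of_nonneg_left (hX1 ω) (le_of_lt (inv_pos.mpr (hgpos ω)))
            _ = (N n i ω * (N n i ω + β))⁻¹ := mul_one _
            _ ≤ (a i * a i)⁻¹ := hgbd ω
        · exact mul_nonneg (le_of_lt (inv_pos.mpr (hgpos ω))) (hX0 ω)
    have intT : Integrable
        (fun ω => X (n + 1) i ω * A (n + 1) i ω / (N n i ω * N (n + 1) i ω)) μ := by
      refine intbd _ (β / (a i * a i))
        (((hXmeas _ _).mul (hAmeas _ _)).div ((hNmeas n i).mul (hNmeas (n + 1) i)))
        (fun ω => ?_) fun ω => ?_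
      · exact div_nonneg (hXAnn (n + 1) hn11 i hiId ω)
          (le_of_lt (mul_pos (hNpos n i hiId ω) (hNpos (n + 1) i hiId ω)))
      · refine div_le_div₀ hβ0 (hXAβ (n + 1) hn11 i hiId ω) (mul_pos hai hai) ?_
        exact mul_le_mul (hNge n i hiId ω) (hNge (n + 1) i hiId ω) (le_of_lt hai)
          (le_of_lt (hNpos n i hiId ω))
    have intB : Integrable (fun ω => 1 / (S n ω * (N n i ω + β))) μ := by
      refine intbd _ (1 / (s0 * a i))
        (measurable_const.div ((hSmeas n).mul ((hNmeas n i).add measurable_const)))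
        (fun ω => le_of_lt (one_div_pos.mpr (mul_pos (hSpos n ω)
          (by linarith [hNpos n i hiId ω])))) fun ω => ?_
      refine one_div_le_one_div_of_le (mul_pos hs0 hai) ?_
      refine mul_le_mul (hSge n ω) (by linarith [hNge n i hiId ω]) (le_of_lt hai)
        (le_of_lt (hSpos n ω))
    have intZg : Integrable (fun ω => (N n i ω * (N n i ω + β))⁻¹ * Z n i ω) μ := by
      have hmeasZ : Measurable (Z n i) := by
        have h : Z n i = fun ω => N n i ω / S n ω := funext fun ω => hZ n i ω
        rw [h]; exact (hNmeas n i).div (hSmeas n)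
      refine intbd _ ((a i * a i)⁻¹)
        ((((hNmeas n i).mul ((hNmeas n i).add measurable_const)).inv).mul hmeasZ)
        (fun ω => ?_) fun ω => ?_
      · refine mul_nonneg (le_of_lt (inv_pos.mpr (hgpos ω))) ?_
        rw [hZ n i ω]
        exact div_nonneg (le_of_lt (hNpos n i hiId ω)) (le_of_lt (hSpos n ω))
      · have hZ1 : Z n i ω ≤ 1 := by
          rw [hZ n i ω]
          exact div_le_one_of_le₀ (hNS n ω) (le_of_lt (hSpos n ω))
        calc (N n i ω * (N n i ω + β))⁻¹ * Z n i ω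
            ≤ (N n i ω * (N n i ω + β))⁻¹ * 1 :=
              mul_le_mul_of_nonneg_left hZ1 (le_of_lt (inv_pos.mpr (hgpos ω)))
          _ = (N n i ω * (N n i ω + β))⁻¹ := mul_one _
          _ ≤ (a i * a i)⁻¹ := hgbd ω
    -- independence step
    have hind := hindep (n + 1) hn11
    rw [Nat.add_sub_cancel] at hind
    have hg'G : Measurable[G n] fun ω => (N n i ω * (N n i ω + β))⁻¹ :=
      (((hNG n).mul ((hNG n).add (@measurable_const ℝ Ω _ (G n) _))).inv)
    have hXm2 : Measurable[G n ⊔ ⨆ j ∈ Finset.Icc 1 d,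
        MeasurableSpace.comap (X (n + 1) j) Real.measurableSpace] (X (n + 1) i) := by
      apply Measurable.of_comap_le
      exact le_trans (le_iSup₂ (f := fun j (_ : j ∈ Finset.Icc 1 d) =>
        MeasurableSpace.comap (X (n + 1) j) Real.measurableSpace) i hiId) le_sup_right
    have hhm2 : Measurable[G n ⊔ ⨆ j ∈ Finset.Icc 1 d,
        MeasurableSpace.comap (X (n + 1) j) Real.measurableSpace]
        fun ω => (N n i ω * (N n i ω + β))⁻¹ * X (n + 1) i ω :=
      (hg'G.mono le_sup_left le_rfl).mul hXm2
    have hAm1 : Measurable[⨆ j ∈ Finset.Icc 1 d,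
        MeasurableSpace.comap (A (n + 1) j) Real.measurableSpace] (A (n + 1) i) := by
      apply Measurable.of_comap_le
      exact le_iSup₂ (f := fun j (_ : j ∈ Finset.Icc 1 d) =>
        MeasurableSpace.comap (A (n + 1) j) Real.measurableSpace) i hiId
    have hIF : IndepFun (A (n + 1) i)
        (fun ω => (N n i ω * (N n i ω + β))⁻¹ * X (n + 1) i ω) μ := by
      rw [IndepFun_iff_Indep]
      exact indep_of_indep_of_le_right (indep_of_indep_of_le_left hind hAm1.comap_le)
        hhm2.comap_le
    have e4 : ∫ ω, A (n + 1) i ω * ((N n i ω * (N n i ω + β))⁻¹ * X (n + 1) i ω) ∂μ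
        = (∫ ω, A (n + 1) i ω ∂μ) *
          ∫ ω, (N n i ω * (N n i ω + β))⁻¹ * X (n + 1) i ω ∂μ :=
      hIF.integral_fun_mul_eq_mul_integral intA.aestronglyMeasurable inth.aestronglyMeasurable
    -- conditional expectation step
    have hg'sm : StronglyMeasurable[G n] fun ω => (N n i ω * (N n i ω + β))⁻¹ :=
      hg'G.stronglyMeasurable
    have e5 : μ[(fun ω => (N n i ω * (N n i ω + β))⁻¹) * X (n + 1) i | G n]
        =ᵐ[μ] (fun ω => (N n i ω * (N n i ω + β))⁻¹) * μ[X (n + 1) i | G n] :=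
      condExp_mul_of_stronglyMeasurable_left hg'sm inth intX
    have e6 : ∫ ω, (N n i ω * (N n i ω + β))⁻¹ * X (n + 1) i ω ∂μ
        = ∫ ω, (N n i ω * (N n i ω + β))⁻¹ * Z n i ω ∂μ := by
      have h1 : ∫ ω, (N n i ω * (N n i ω + β))⁻¹ * X (n + 1) i ω ∂μ
          = ∫ ω, ((fun ω => (N n i ω * (N n i ω + β))⁻¹) * X (n + 1) i) ω ∂μ := rfl
      rw [h1, ← integral_condExp (hGle n)]
      refine integral_congr_ae ?_
      refine e5.trans ?_
      have := (hZcond n i hiId).symm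
      filter_upwards [this] with ω hω
      simp only [Pi.mul_apply]
      rw [hω]
    -- pointwise identities/inequalities
    have e2 : ∀ ω, 1 / N n i ω - 1 / N (n + 1) i ω
        = X (n + 1) i ω * A (n + 1) i ω / (N n i ω * N (n + 1) i ω) := by
      intro ω
      have h1 : N n i ω ≠ 0 := ne_of_gt (hNpos n i hiId ω)
      have h2 : N (n + 1) i ω ≠ 0 := ne_of_gt (hNpos (n + 1) i hiId ω)
      rw [div_sub_div _ _ h1 h2, hNsucc n ω]
      ring_nf
    have e3 : ∀ ω, A (n + 1) i ω * ((N n i ω * (N n i ω + β))⁻¹ * X (n + 1) i ω)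
        ≤ X (n + 1) i ω * A (n + 1) i ω / (N n i ω * N (n + 1) i ω) := by
      intro ω
      have hNn := hNpos n i hiId ω
      have hN1 := hNpos (n + 1) i hiId ω
      have hub : N (n + 1) i ω ≤ N n i ω + β := by
        rw [hNsucc n ω]; linarith [hXAβ (n + 1) hn11 i hiId ω]
      have hnum : 0 ≤ X (n + 1) i ω * A (n + 1) i ω := hXAnn (n + 1) hn11 i hiId ω
      have hstep : X (n + 1) i ω * A (n + 1) i ω / (N n i ω * (N n i ω + β))
          ≤ X (n + 1) i ω * A (n + 1) i ω / (N n i ω * N (n + 1) i ω) :=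
        div_le_div_of_nonneg_left hnum (mul_pos hNn hN1)
          (mul_le_mul_of_nonneg_left hub (le_of_lt hNn))
      calc A (n + 1) i ω * ((N n i ω * (N n i ω + β))⁻¹ * X (n + 1) i ω)
          = X (n + 1) i ω * A (n + 1) i ω / (N n i ω * (N n i ω + β)) := by
            rw [div_eq_mul_inv]; ring
        _ ≤ X (n + 1) i ω * A (n + 1) i ω / (N n i ω * N (n + 1) i ω) := hstep
    have e6pt : ∀ ω, (N n i ω * (N n i ω + β))⁻¹ * Z n i ω
        = 1 / (S n ω * (N n i ω + β)) := by
      intro ω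
      have h1 : N n i ω ≠ 0 := ne_of_gt (hNpos n i hiId ω)
      have h2 : S n ω ≠ 0 := ne_of_gt (hSpos n ω)
      have h3 : N n i ω + β ≠ 0 := by linarith [hNpos n i hiId ω]
      rw [hZ n i ω]
      field_simp
    have e7 : ∀ ω, a i / (a i + β) * (1 / (S n ω * N n i ω))
        ≤ 1 / (S n ω * (N n i ω + β)) := by
      intro ω
      have hS' := hSpos n ω
      have hN' := hNpos n i hiId ω
      have hge := hNge n i hiId ω
      rw [div_mul_div_comm, div_le_div_iff₀ (by positivity) (by positivity)]
      nlinarith [mul_nonneg (mul_nonneg hβ0 (le_of_lt hS')) (sub_nonneg.mpr hge)]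
    -- the expectation of A is at least m/2
    have hEe : m / 2 ≤ ∫ ω, A (n + 1) i ω ∂μ := by
      rw [hEA (n + 1) hn11 i hi]
      refine le_of_lt (hn0 (n + 1) ?_)
      calc n0 ≤ n1 := le_max_left _ _
        _ ≤ n + 1 := le_trans hn (Nat.le_succ n)
    have hBnn : 0 ≤ ∫ ω, 1 / (S n ω * (N n i ω + β)) ∂μ :=
      integral_nonneg fun ω => le_of_lt (one_div_pos.mpr (mul_pos (hSpos n ω)
        (by linarith [hNpos n i hiId ω])))
    -- assemble
    have step1 : c * ∫ ω, 1 / (S n ω * N n i ω) ∂μ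
        ≤ m / 2 * ∫ ω, 1 / (S n ω * (N n i ω + β)) ∂μ := by
      have hmono : ∫ ω, a i / (a i + β) * (1 / (S n ω * N n i ω)) ∂μ
          ≤ ∫ ω, 1 / (S n ω * (N n i ω + β)) ∂μ :=
        integral_mono ((hfint n).const_mul _) intB e7
      rw [integral_const_mul] at hmono
      calc c * ∫ ω, 1 / (S n ω * N n i ω) ∂μ
          = m / 2 * (a i / (a i + β) * ∫ ω, 1 / (S n ω * N n i ω) ∂μ) := by
            rw [hcdef]; ring
        _ ≤ m / 2 * ∫ ω, 1 / (S n ω * (N n i ω + β)) ∂μ :=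
            mul_le_mul_of_nonneg_left hmono (by linarith)
    have step2 : m / 2 * ∫ ω, 1 / (S n ω * (N n i ω + β)) ∂μ
        ≤ (∫ ω, A (n + 1) i ω ∂μ) * ∫ ω, 1 / (S n ω * (N n i ω + β)) ∂μ :=
      mul_le_mul_of_nonneg_right hEe hBnn
    have step3 : (∫ ω, A (n + 1) i ω ∂μ) * ∫ ω, 1 / (S n ω * (N n i ω + β)) ∂μ
        = ∫ ω, A (n + 1) i ω * ((N n i ω * (N n i ω + β))⁻¹ * X (n + 1) i ω) ∂μ := by
      rw [e4, e6]
      congr 1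
      refine integral_congr_ae (ae_of_all _ fun ω => ?_)
      exact (e6pt ω).symm
    have step4 : ∫ ω, A (n + 1) i ω * ((N n i ω * (N n i ω + β))⁻¹ * X (n + 1) i ω) ∂μ
        ≤ ∫ ω, X (n + 1) i ω * A (n + 1) i ω / (N n i ω * N (n + 1) i ω) ∂μ :=
      integral_mono intAh intT e3
    have step5 : ∫ ω, X (n + 1) i ω * A (n + 1) i ω / (N n i ω * N (n + 1) i ω) ∂μ
        = (∫ ω, 1 / N n i ω ∂μ) - ∫ ω, 1 / N (n + 1) i ω ∂μ := by
      rw [← integral_sub (hinvNint n) (hinvNint (n + 1))]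
      refine integral_congr_ae (ae_of_all _ fun ω => ?_)
      exact (e2 ω).symm
    calc c * ∫ ω, 1 / (S n ω * N n i ω) ∂μ
        ≤ m / 2 * ∫ ω, 1 / (S n ω * (N n i ω + β)) ∂μ := step1
      _ ≤ (∫ ω, A (n + 1) i ω ∂μ) * ∫ ω, 1 / (S n ω * (N n i ω + β)) ∂μ := step2
      _ = ∫ ω, A (n + 1) i ω * ((N n i ω * (N n i ω + β))⁻¹ * X (n + 1) i ω) ∂μ := step3
      _ ≤ ∫ ω, X (n + 1) i ω * A (n + 1) i ω / (N n i ω * N (n + 1) i ω) ∂μ := step4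
      _ = (∫ ω, 1 / N n i ω ∂μ) - ∫ ω, 1 / N (n + 1) i ω ∂μ := step5
  -- summability of the integrals
  have hsumInt : Summable fun n => ∫ ω, 1 / (S n ω * N n i ω) ∂μ := by
    rw [← summable_nat_add_iff n1]
    refine summable_of_sum_range_le (c := c⁻¹ * ∫ ω, 1 / N n1 i ω ∂μ)
      (fun k => integral_nonneg fun ω => hfnn _ ω) fun M => ?_
    have htel : ∑ k ∈ Finset.range M,
        ((∫ ω, 1 / N (k + n1) i ω ∂μ) - ∫ ω, 1 / N (k + 1 + n1) i ω ∂μ)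
        = (∫ ω, 1 / N n1 i ω ∂μ) - ∫ ω, 1 / N (M + n1) i ω ∂μ := by
      have h := Finset.sum_range_sub' (f := fun k => ∫ ω, 1 / N (k + n1) i ω ∂μ) M
      simpa using h
    have hle : ∑ k ∈ Finset.range M, ∫ ω, 1 / (S (k + n1) ω * N (k + n1) i ω) ∂μ
        ≤ c⁻¹ * ((∫ ω, 1 / N n1 i ω ∂μ) - ∫ ω, 1 / N (M + n1) i ω ∂μ) := by
      rw [← htel, Finset.mul_sum]
      refine Finset.sum_le_sum fun k _ => ?_
      have hk := key (k + n1) (Nat.le_add_left n1 k)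
      have hrw : k + 1 + n1 = k + n1 + 1 := by ring
      rw [hrw]
      calc ∫ ω, 1 / (S (k + n1) ω * N (k + n1) i ω) ∂μ
          = c⁻¹ * (c * ∫ ω, 1 / (S (k + n1) ω * N (k + n1) i ω) ∂μ) := by
            field_simp
        _ ≤ c⁻¹ * ((∫ ω, 1 / N (k + n1) i ω ∂μ) - ∫ ω, 1 / N (k + n1 + 1) i ω ∂μ) :=
            mul_le_mul_of_nonneg_left hk (le_of_lt (inv_pos.mpr hcpos))
    refine le_trans hle ?_
    have h2 : (∫ ω, 1 / N n1 i ω ∂μ) - ∫ ω, 1 / N (M + n1) i ω ∂μ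
        ≤ ∫ ω, 1 / N n1 i ω ∂μ := by linarith [hu_nn (M + n1)]
    exact mul_le_mul_of_nonneg_left h2 (le_of_lt (inv_pos.mpr hcpos))
  -- conclude almost sure summability
  have hFmeas : ∀ n, Measurable fun ω => ENNReal.ofReal (1 / (S n ω * N n i ω)) :=
    fun n => (hfmeas n).ennreal_ofReal
  have hlin : ∑' n, ∫⁻ ω, ENNReal.ofReal (1 / (S n ω * N n i ω)) ∂μ ≠ ⊤ := by
    have h1 : ∀ n, ∫⁻ ω, ENNReal.ofReal (1 / (S n ω * N n i ω)) ∂μ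
        = ENNReal.ofReal (∫ ω, 1 / (S n ω * N n i ω) ∂μ) := fun n =>
      (ofReal_integral_eq_lintegral_ofReal (hfint n) (ae_of_all _ fun ω => hfnn n ω)).symm
    simp_rw [h1]
    rw [← ENNReal.ofReal_tsum_of_nonneg (fun n => integral_nonneg fun ω => hfnn n ω) hsumInt]
    exact ENNReal.ofReal_ne_top
  have hae : ∀ᵐ ω ∂μ, (∑' n, ENNReal.ofReal (1 / (S n ω * N n i ω))) < ⊤ := by
    refine ae_lt_top (Measurable.ennreal_tsum hFmeas) ?_
    rw [lintegral_tsum fun n => (hFmeas n).aemeasurable]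
    exact hlin
  filter_upwards [hae] with ω hω
  have hsum := ENNReal.summable_toReal (ne_of_lt hω)
  refine hsum.congr fun n => ?_
  rw [ENNReal.toReal_ofReal (hfnn n ω)]
end
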